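/- Let b₀ ∈ GL_n(K), s ≥ 1 and a ∈ ℤ^n be such that (b₀σ)^s = diag(p^{a_1},…,p^{a_n}). Then there exists a constant C₀ such that for all k ≥ 1: |ā_k, μ((b₀σ)^k)| ≤ C₀, where ā_k is the decreasing rearrangement of the tuple ((k/s)·a_1,…,(k/s)·a_n). (In other words, the Hodge points of the σ-twisted powers of a decent element stay within bounded distance of the multiples of its Newton point.) -/

import Mathlib

/-!
Statement 12.  Let `b₀ ∈ GL_n(K)` satisfy the decency equation
`(b₀σ)^s = diag(p^{a_1},…,p^{a_n})`.  Then there is a constant `C₀` such that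
for all `k ≥ 1`: `|ā_k, μ((b₀σ)^k)| ≤ C₀`, where `ā_k` is the decreasing
rearrangement of `((k/s)·a_1,…,(k/s)·a_n)` (expressed below via any permutation
`e` making the tuple decreasing).
-/

open Matrix

noncomputable section

variable (p : ℕ) [Fact p.Prime] (κ : Type) [Field κ] [IsAlgClosed κ] [CharP κ p]

local notation "𝕎" => WittVector p κ
local notation "K" => FractionRing (WittVector p κ)

/-- `c ∈ GL_n(W(κ)) ⊆ GL_n(K)`. -/
def IsIntegralUnit {n : ℕ} (c : Matrix (Fin n) (Fin n) K) : Prop :=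
  ∃ d : Matrix (Fin n) (Fin n) 𝕎, IsUnit d.det ∧ c = d.map (algebraMap 𝕎 K)

/-- `μ` is the Hodge point of `b`. -/
def IsHodgePoint {n : ℕ} (b : Matrix (Fin n) (Fin n) K) (μ : Fin n → ℤ) : Prop :=
  Antitone μ ∧ ∃ c₁ c₂ : Matrix (Fin n) (Fin n) K, IsIntegralUnit p κ c₁ ∧ IsIntegralUnit p κ c₂ ∧
    b = c₁ * Matrix.diagonal (fun i => (p : K) ^ (μ i)) * c₂

/-- `twistedPow σ b i = (bσ)^i = b·σ(b)·σ²(b)···σ^{i−1}(b)`. -/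
def twistedPow {n : ℕ} (σ : K ≃+* K) (b : Matrix (Fin n) (Fin n) K) :
    ℕ → Matrix (Fin n) (Fin n) K
  | 0 => 1
  | (i + 1) => b * (twistedPow σ b i).map ⇑σ

/-- The distance `|x, x'| = Σ_{i : xᵢ > x'ᵢ} (xᵢ − x'ᵢ)` between two tuples. -/
def tdist {n : ℕ} (x x' : Fin n → ℚ) : ℚ := ∑ i, max (x i - x' i) 0

set_option linter.unusedSectionVars false
set_option maxHeartbeats 1000000

/-- `x ∈ p^m · W(κ)` viewed inside `K`. -/
def gvv (m : ℤ) (x : K) : Prop := ∃ w : 𝕎, x = (p : K) ^ m * algebraMap 𝕎 K w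

theorem pK_ne_zero : (p : K) ≠ 0 := WittVector.FractionRing.p_nonzero p κ

theorem gvv_zero (m : ℤ) : gvv p κ m 0 := ⟨0, by simp⟩

theorem gvv_add {m : ℤ} {x y : K} (hx : gvv p κ m x) (hy : gvv p κ m y) :
    gvv p κ m (x + y) := by
  obtain ⟨w, rfl⟩ := hx; obtain ⟨w', rfl⟩ := hy
  exact ⟨w + w', by rw [map_add]; ring⟩

theorem gvv_sum {ι : Type*} (s : Finset ι) (m : ℤ) (f : ι → K)
    (h : ∀ i ∈ s, gvv p κ m (f i)) : gvv p κ m (∑ i ∈ s, f i) :=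
  Finset.sum_induction f _ (fun _ _ => gvv_add p κ) (gvv_zero p κ m) h

theorem gvv_mul {m m' : ℤ} {x y : K} (hx : gvv p κ m x) (hy : gvv p κ m' y) :
    gvv p κ (m + m') (x * y) := by
  obtain ⟨w, rfl⟩ := hx; obtain ⟨w', rfl⟩ := hy
  exact ⟨w * w', by rw [_root_.map_mul, zpow_add₀ (pK_ne_zero p κ)]; ring⟩

theorem gvv_intmul {m : ℤ} (z : ℤ) {x : K} (hx : gvv p κ m x) :
    gvv p κ m ((z : K) * x) := by
  obtain ⟨w, rfl⟩ := hx
  exact ⟨(z : 𝕎) * w, by rw [_root_.map_mul, map_intCast]; ring⟩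

theorem gvv_mono {m' m : ℤ} (h : m' ≤ m) {x : K} (hx : gvv p κ m x) : gvv p κ m' x := by
  obtain ⟨w, rfl⟩ := hx
  refine ⟨(p : 𝕎) ^ (m - m').toNat * w, ?_⟩
  rw [_root_.map_mul, map_pow, map_natCast, ← mul_assoc, ← zpow_natCast (p : K),
    ← zpow_add₀ (pK_ne_zero p κ)]
  congr 2
  omega

theorem gvv_prod {ι : Type*} (s : Finset ι) (v : ℤ) (f : ι → K)
    (h : ∀ i ∈ s, gvv p κ v (f i)) : gvv p κ (s.card * v) (∏ i ∈ s, f i) := by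
  classical
  induction s using Finset.cons_induction with
  | empty => exact ⟨1, by simp⟩
  | cons a s ha ih =>
    rw [Finset.prod_cons, Finset.card_cons]
    have h1 := gvv_mul p κ (h a (Finset.mem_cons_self a s))
      (ih fun i hi => h i (Finset.mem_cons_of_mem hi))
    have h2 : ((s.card + 1 : ℕ) : ℤ) * v = v + (s.card : ℤ) * v := by push_cast; ring
    rw [h2]
    exact h1

theorem gvv_ppow (t : ℤ) : gvv p κ t ((p : K) ^ t) := ⟨1, by simp⟩

theorem gvv_le {m t : ℤ} (h : gvv p κ m ((p : K) ^ t)) : m ≤ t := by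
  by_contra hlt
  push_neg at hlt
  obtain ⟨w, hw⟩ := h
  have hpK : (p : K) ≠ 0 := pK_ne_zero p κ
  have hw' : algebraMap 𝕎 K w = (p : K) ^ (t - m) := by
    rw [zpow_sub₀ hpK, hw, mul_div_cancel_left₀ _ (zpow_ne_zero _ hpK)]
  have key : algebraMap 𝕎 K ((p : 𝕎) ^ (m - t).toNat * w) = algebraMap 𝕎 K 1 := by
    rw [_root_.map_mul, map_pow, map_natCast, _root_.map_one, hw', ← zpow_natCast (p : K),
      ← zpow_add₀ hpK, show ((m - t).toNat : ℤ) + (t - m) = 0 by omega, zpow_zero]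
  have key2 : (p : 𝕎) ^ (m - t).toNat * w = 1 := IsFractionRing.injective 𝕎 K key
  have hunit : IsUnit (p : 𝕎) := by
    refine IsUnit.of_mul_eq_one ((p : 𝕎) ^ ((m - t).toNat - 1) * w) ?_
    rw [← mul_assoc, ← pow_succ', show (m - t).toNat - 1 + 1 = (m - t).toNat by omega, key2]
  exact (WittVector.irreducible p).not_isUnit hunit

theorem gvv_sigma (σ : K ≃+* K)
    (hσ : ∀ x : 𝕎, σ (algebraMap 𝕎 K x) = algebraMap 𝕎 K (WittVector.frobenius x))
    {m : ℤ} {x : K} (hx : gvv p κ m x) : gvv p κ m (σ x) := by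
  obtain ⟨w, rfl⟩ := hx
  refine ⟨WittVector.frobenius w, ?_⟩
  rw [_root_.map_mul, hσ]
  congr 1
  rw [map_zpow₀, map_natCast]

theorem gvv_sigma_pow (σ : K ≃+* K)
    (hσ : ∀ x : 𝕎, σ (algebraMap 𝕎 K x) = algebraMap 𝕎 K (WittVector.frobenius x))
    (i : ℕ) {m : ℤ} {x : K} (hx : gvv p κ m x) : gvv p κ m ((σ ^ i) x) := by
  induction i with
  | zero => simpa using hx
  | succ i ih =>
    have h1 : (σ ^ (i + 1)) x = σ ((σ ^ i) x) := by rw [pow_succ']; rfl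
    rw [h1]
    exact gvv_sigma p κ σ hσ ih

theorem exists_gvv_neg (x : K) : ∃ m : ℕ, gvv p κ (-(m : ℤ)) x := by
  obtain ⟨aa, bb, hbb, rfl⟩ := IsFractionRing.div_surjective (A := 𝕎) x
  have hbb0 : bb ≠ 0 := nonZeroDivisors.ne_zero hbb
  obtain ⟨m, u, hu⟩ := WittVector.exists_eq_pow_p_mul' bb hbb0
  refine ⟨m, aa * ↑u⁻¹, ?_⟩
  have hpK : (p : K) ≠ 0 := pK_ne_zero p κ
  have hbbK : algebraMap 𝕎 K bb ≠ 0 := by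
    rw [map_ne_zero_iff _ (IsFractionRing.injective 𝕎 K)]; exact hbb0
  have hpm : algebraMap 𝕎 K bb = (p : K) ^ (m : ℕ) * algebraMap 𝕎 K ↑u := by
    rw [hu, _root_.map_mul, map_pow, map_natCast]
  have hm : (p : K) ^ (-(m : ℤ)) * (p : K) ^ (m : ℕ) = 1 := by
    rw [← zpow_natCast (p : K) m, ← zpow_add₀ hpK, neg_add_cancel, zpow_zero]
  have key : algebraMap 𝕎 K ↑u⁻¹ * algebraMap 𝕎 K ↑u = 1 := by
    rw [← _root_.map_mul, Units.inv_mul, _root_.map_one]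
  rw [div_eq_iff hbbK, hpm, _root_.map_mul]
  calc algebraMap 𝕎 K aa
      = ((p : K) ^ (-(m : ℤ)) * (p : K) ^ (m : ℕ)) *
        (algebraMap 𝕎 K aa * (algebraMap 𝕎 K ↑u⁻¹ * algebraMap 𝕎 K ↑u)) := by
        rw [hm, key]; ring
    _ = (p : K) ^ (-(m : ℤ)) * (algebraMap 𝕎 K aa * algebraMap 𝕎 K ↑u⁻¹) *
        ((p : K) ^ (m : ℕ) * algebraMap 𝕎 K ↑u) := by ring

/-- combinatorial helpers (no Witt vectors) -/
theorem sm_le_aux {N j : ℕ} (g : Fin j → Fin N) (hg : StrictMono g) :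
    ∀ m (t : Fin j), t.1 = m → m ≤ (g t).1 := by
  intro m
  induction m with
  | zero => intro t _; exact Nat.zero_le _
  | succ i ih =>
    intro t ht
    have hti : i < j := by have := t.2; omega
    have h1 : (⟨i, hti⟩ : Fin j) < t := by rw [Fin.lt_def]; show i < t.1; omega
    have h2 := hg h1
    have h3 := ih ⟨i, hti⟩ rfl
    rw [Fin.lt_def] at h2
    omega

theorem sm_le {N j : ℕ} (g : Fin j → Fin N) (hg : StrictMono g) (t : Fin j) :
    (t : ℕ) ≤ (g t : ℕ) :=
  sm_le_aux g hg t.1 t rfl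

def lastT {n : ℕ} (j : ℕ) (hj : j ≤ n) (t : Fin j) : Fin n :=
  ⟨n - j + t.1, by have := t.2; omega⟩

theorem lastT_inj {n j : ℕ} (hj : j ≤ n) : Function.Injective (lastT j hj) := by
  intro t t' h
  have := congrArg Fin.val h
  simp only [lastT] at this
  exact Fin.ext (by omega)

theorem sum_lastT_le {n j : ℕ} (hj : j ≤ n) (f : Fin n → ℤ) (hf : Antitone f)
    (R : Fin j → Fin n) (hR : Function.Injective R) :
    ∑ t, f (lastT j hj t) ≤ ∑ t, f (R t) := by
  set g : Fin j → Fin n := R ∘ Tuple.sort R with hg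
  have hmono : Monotone g := Tuple.monotone_sort R
  have hginj : Function.Injective g := hR.comp (Equiv.injective _)
  have hsm : StrictMono g := hmono.strictMono_of_injective hginj
  have hsum : ∑ t, f (R t) = ∑ t, f (g t) :=
    (Equiv.sum_comp (Tuple.sort R) (fun t => f (R t))).symm
  rw [hsum]
  refine Finset.sum_le_sum fun t _ => ?_
  refine hf ?_
  have hre : StrictMono (fun u : Fin j => (g u.rev).rev) := by
    intro u u' huu'
    exact Fin.rev_lt_rev.mpr (hsm (Fin.rev_lt_rev.mpr huu'))
  have h2 := sm_le _ hre t.rev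
  simp only [Fin.rev_rev] at h2
  have hv1 : (t.rev : ℕ) = j - 1 - t.1 := by
    rw [Fin.val_rev]; omega
  have hv2 : (((g t).rev) : ℕ) = n - 1 - (g t).1 := by
    rw [Fin.val_rev]; omega
  have h3 := (g t).2
  have h4 := t.2
  rw [hv1, hv2] at h2
  show (g t) ≤ lastT j hj t
  rw [Fin.le_def]
  show (g t).1 ≤ n - j + t.1
  omega

/-- All entries have valuation at least `c`. -/
def EntB (c : ℤ) {ι ι' : Type} (M : Matrix ι ι' K) : Prop := ∀ i j, gvv p κ c (M i j)

/-- All `j × j` "generalized minors" have valuation at least `c`. -/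
def MinB (j : ℕ) (c : ℤ) {n : ℕ} (M : Matrix (Fin n) (Fin n) K) : Prop :=
  ∀ R C : Fin j → Fin n, gvv p κ c ((M.submatrix R C).det)

theorem det_gvv {j : ℕ} {v : ℤ} (M : Matrix (Fin j) (Fin j) K)
    (h : ∀ i i', gvv p κ v (M i i')) : gvv p κ (j * v) M.det := by
  rw [Matrix.det_apply']
  refine gvv_sum p κ _ _ _ fun σ _ => ?_
  refine gvv_intmul p κ _ ?_
  have h1 := gvv_prod p κ Finset.univ v (fun i => M (σ i) i) (fun i _ => h _ _)
  simpa using h1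

theorem minB_of_entB {n j : ℕ} {v : ℤ} {M : Matrix (Fin n) (Fin n) K}
    (h : EntB p κ v M) : MinB p κ j ((j : ℤ) * v) M := by
  intro R C
  exact det_gvv p κ _ fun i i' => h _ _

theorem det_rect {j n : ℕ} (A : Matrix (Fin j) (Fin n) K) (B : Matrix (Fin n) (Fin j) K) :
    Matrix.det (A * B) =
      ∑ g : Fin j → Fin n, (∏ i, B (g i) i) * Matrix.det (A.submatrix id g) := by
  simp only [Matrix.det_apply', Matrix.mul_apply, Finset.prod_univ_sum, Finset.mul_sum,
    Fintype.piFinset_univ]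
  rw [Finset.sum_comm]
  refine Finset.sum_congr rfl fun g _ => ?_
  refine Finset.sum_congr rfl fun σ _ => ?_
  simp only [Matrix.submatrix_apply, id]
  rw [Finset.prod_mul_distrib]
  ring

theorem det_rect' {j n : ℕ} (A : Matrix (Fin j) (Fin n) K) (B : Matrix (Fin n) (Fin j) K) :
    Matrix.det (A * B) =
      ∑ g : Fin j → Fin n, (∏ i, A i (g i)) * Matrix.det (B.submatrix g id) := by
  rw [← Matrix.det_transpose, Matrix.transpose_mul, det_rect]
  refine Finset.sum_congr rfl fun g _ => ?_
  rw [← Matrix.det_transpose (B.submatrix g id), Matrix.transpose_submatrix]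
  rfl

theorem minB_mul_entB {n j : ℕ} {u v : ℤ} {M Y : Matrix (Fin n) (Fin n) K}
    (hM : MinB p κ j u M) (hY : EntB p κ v Y) : MinB p κ j (u + (j : ℤ) * v) (M * Y) := by
  intro R C
  rw [Matrix.submatrix_mul M Y R id C Function.bijective_id, det_rect]
  refine gvv_sum p κ _ _ _ fun g _ => ?_
  have h1 : gvv p κ ((j : ℤ) * v) (∏ i, Y.submatrix id C (g i) i) := by
    have h2 := gvv_prod p κ Finset.univ v (fun i => Y.submatrix id C (g i) i)
      (fun i _ => hY (g i) (C i))
    simpa using h2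
  have h2 := hM R g
  have h3 := gvv_mul p κ h1 h2
  have h4 : (M.submatrix R id).submatrix id g = M.submatrix R g := by
    rw [Matrix.submatrix_submatrix]; rfl
  rw [h4]
  exact gvv_mono p κ (le_of_eq (add_comm _ _)) h3

theorem entB_mul_minB {n j : ℕ} {u v : ℤ} {X M : Matrix (Fin n) (Fin n) K}
    (hX : EntB p κ u X) (hM : MinB p κ j v M) : MinB p κ j ((j : ℤ) * u + v) (X * M) := by
  intro R C
  rw [Matrix.submatrix_mul X M R id C Function.bijective_id, det_rect']
  refine gvv_sum p κ _ _ _ fun g _ => ?_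
  have h1 : gvv p κ ((j : ℤ) * u) (∏ i, X.submatrix R id i (g i)) := by
    have h2 := gvv_prod p κ Finset.univ u (fun i => X.submatrix R id i (g i))
      (fun i _ => hX (R i) (g i))
    simpa using h2
  have h2 := hM g C
  have h4 : (M.submatrix id C).submatrix g id = M.submatrix g C := by
    rw [Matrix.submatrix_submatrix]; rfl
  rw [h4]
  exact gvv_mul p κ h1 h2

theorem minB_diagonal {n j : ℕ} {m : ℤ} (d : Fin n → K)
    (h : ∀ R : Fin j → Fin n, Function.Injective R → gvv p κ m (∏ t, d (R t))) :
    MinB p κ j m (Matrix.diagonal d) := by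
  intro R C
  by_cases hR : Function.Injective R
  · rw [Matrix.det_apply']
    refine gvv_sum p κ _ _ _ fun σ _ => ?_
    by_cases hall : ∀ i, R (σ i) = C i
    · have heq : ∏ i, (Matrix.diagonal d).submatrix R C (σ i) i = ∏ t, d (R t) := by
        rw [← Equiv.prod_comp σ (fun t => d (R t))]
        refine Finset.prod_congr rfl fun i _ => ?_
        rw [Matrix.submatrix_apply, ← hall i, Matrix.diagonal_apply_eq]
      rw [heq]
      exact gvv_intmul p κ _ (h R hR)
    · push_neg at hall
      obtain ⟨i, hi⟩ := hall
      have heq : ∏ i, (Matrix.diagonal d).submatrix R C (σ i) i = 0 :=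
        Finset.prod_eq_zero (Finset.mem_univ i)
          (by rw [Matrix.submatrix_apply]; exact Matrix.diagonal_apply_ne d hi)
      rw [heq, mul_zero]
      exact gvv_zero p κ m
  · rw [Function.not_injective_iff] at hR
    obtain ⟨i, i', hii', hne⟩ := hR
    rw [Matrix.det_zero_of_row_eq hne (by funext t; simp [hii'])]
    exact gvv_zero p κ m

theorem det_diag_submatrix {n j : ℕ} (d : Fin n → K) (R : Fin j → Fin n)
    (hR : Function.Injective R) :
    ((Matrix.diagonal d).submatrix R R).det = ∏ t, d (R t) := by
  have heq : (Matrix.diagonal d).submatrix R R = Matrix.diagonal (fun t => d (R t)) := by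
    ext i i'
    by_cases h : i = i'
    · subst h; simp
    · rw [Matrix.submatrix_apply, Matrix.diagonal_apply_ne _ (fun hc => h (hR hc)),
        Matrix.diagonal_apply_ne _ h]
  rw [heq, Matrix.det_diagonal]

theorem ppow_sum {ι : Type} (s : Finset ι) (m : ι → ℤ) :
    (p : K) ^ (∑ i ∈ s, m i) = ∏ i ∈ s, (p : K) ^ (m i) := by
  classical
  induction s using Finset.cons_induction with
  | empty => simp
  | cons a s ha ih => rw [Finset.sum_cons, Finset.prod_cons, zpow_add₀ (pK_ne_zero p κ), ih]

theorem IsIntegralUnit.entB {n : ℕ} {c : Matrix (Fin n) (Fin n) K}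
    (h : IsIntegralUnit p κ c) : EntB p κ 0 c := by
  obtain ⟨d, _, rfl⟩ := h
  intro i j
  exact ⟨d i j, by simp [Matrix.map_apply]⟩

theorem IsIntegralUnit.det_isUnit {n : ℕ} {c : Matrix (Fin n) (Fin n) K}
    (h : IsIntegralUnit p κ c) : IsUnit c.det := by
  obtain ⟨d, hd, rfl⟩ := h
  rw [← RingHom.mapMatrix_apply, ← RingHom.map_det]
  exact hd.map _

theorem IsIntegralUnit.entB_inv {n : ℕ} {c : Matrix (Fin n) (Fin n) K}
    (h : IsIntegralUnit p κ c) : EntB p κ 0 c⁻¹ := by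
  obtain ⟨d, hd, rfl⟩ := h
  have h1 : (d.map (algebraMap 𝕎 K)) * (d⁻¹.map (algebraMap 𝕎 K)) = 1 := by
    rw [← Matrix.map_mul, Matrix.mul_nonsing_inv _ hd,
      Matrix.map_one _ (map_zero _) (_root_.map_one _)]
  rw [Matrix.inv_eq_right_inv h1]
  intro i j
  exact ⟨d⁻¹ i j, by simp [Matrix.map_apply]⟩

theorem map_mul_equiv {n : ℕ} (f : K ≃+* K) (M N : Matrix (Fin n) (Fin n) K) :
    (M * N).map ⇑f = M.map ⇑f * N.map ⇑f := by
  have h := Matrix.map_mul (L := M) (M := N) (f := (f : K →+* K))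
  simpa using h

theorem tp_add {n : ℕ} (σ : K ≃+* K) (b : Matrix (Fin n) (Fin n) K) (i j : ℕ) :
    twistedPow p κ σ b (i + j) =
      twistedPow p κ σ b i * (twistedPow p κ σ b j).map ⇑(σ ^ i) := by
  induction i with
  | zero =>
    have h1 : ⇑((σ : K ≃+* K) ^ (0 : ℕ)) = id := by
      funext x; rw [pow_zero]; rfl
    rw [Nat.zero_add, h1, Matrix.map_id]
    show twistedPow p κ σ b j = 1 * twistedPow p κ σ b j
    rw [Matrix.one_mul]
  | succ i ih =>
    have hcomp : ⇑σ ∘ ⇑(σ ^ i) = ⇑(σ ^ (i + 1)) := by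
      funext x; rw [pow_succ']; rfl
    have h2 : i + 1 + j = (i + j) + 1 := by omega
    rw [h2]
    show b * (twistedPow p κ σ b (i + j)).map ⇑σ = _
    rw [ih, map_mul_equiv, Matrix.map_map, hcomp, ← Matrix.mul_assoc]
    rfl

theorem tp_det_isUnit {n : ℕ} (σ : K ≃+* K) (b : Matrix (Fin n) (Fin n) K)
    (hb : IsUnit b.det) (i : ℕ) : IsUnit (twistedPow p κ σ b i).det := by
  induction i with
  | zero =>
    show IsUnit (1 : Matrix (Fin n) (Fin n) K).det
    rw [Matrix.det_one]; exact isUnit_one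
  | succ i ih =>
    show IsUnit (b * (twistedPow p κ σ b i).map ⇑σ).det
    rw [Matrix.det_mul]
    refine hb.mul ?_
    have h1 : ((twistedPow p κ σ b i).map ⇑σ).det = σ ((twistedPow p κ σ b i).det) :=
      (RingEquiv.map_det σ _).symm
    rw [h1]
    exact ih.map σ

theorem det_map_equiv {n : ℕ} (f : K ≃+* K) (M : Matrix (Fin n) (Fin n) K) :
    (M.map ⇑f).det = f M.det := (RingEquiv.map_det f M).symm

theorem sigma_pow_ppow (σ : K ≃+* K)
    (hσ : ∀ x : 𝕎, σ (algebraMap 𝕎 K x) = algebraMap 𝕎 K (WittVector.frobenius x))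
    (i : ℕ) (t : ℤ) : (σ ^ i) ((p : K) ^ t) = (p : K) ^ t := by
  have h1 : σ (p : K) = (p : K) := map_natCast σ p
  induction i with
  | zero => rfl
  | succ i ih =>
    have h2 : (σ ^ (i + 1)) ((p : K) ^ t) = σ ((σ ^ i) ((p : K) ^ t)) := by
      rw [pow_succ']; rfl
    rw [h2, ih, map_zpow₀, h1]

theorem tp_diag_pow {n : ℕ} (σ : K ≃+* K)
    (hσ : ∀ x : 𝕎, σ (algebraMap 𝕎 K x) = algebraMap 𝕎 K (WittVector.frobenius x))
    (b : Matrix (Fin n) (Fin n) K) (s : ℕ) (a : Fin n → ℤ)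
    (hdec : twistedPow p κ σ b s = Matrix.diagonal fun i => (p : K) ^ (a i)) (q : ℕ) :
    twistedPow p κ σ b (s * q) = Matrix.diagonal fun i => (p : K) ^ ((q : ℤ) * a i) := by
  induction q with
  | zero =>
    rw [Nat.mul_zero]
    show (1 : Matrix (Fin n) (Fin n) K) = _
    have : (fun i : Fin n => (p : K) ^ ((0 : ℕ) * a i : ℤ)) = fun _ => (1 : K) := by
      funext i; push_cast; rw [zero_mul, zpow_zero]
    rw [this, Matrix.diagonal_one]
  | succ q ih =>
    have h2 : s * (q + 1) = s * q + s := by ring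
    rw [h2, tp_add, ih, hdec, Matrix.diagonal_map (map_zero _), Matrix.diagonal_mul_diagonal]
    refine congrArg Matrix.diagonal (funext fun i => ?_)
    rw [sigma_pow_ppow p κ σ hσ, ← zpow_add₀ (pK_ne_zero p κ)]
    congr 1
    push_cast
    ring

theorem exists_c {n : ℕ} (σ : K ≃+* K) (b : Matrix (Fin n) (Fin n) K) (s : ℕ) :
    ∃ c : ℕ, ∀ r : ℕ, r < s →
      EntB p κ (-(c : ℤ)) (twistedPow p κ σ b r) ∧
      EntB p κ (-(c : ℤ)) (twistedPow p κ σ b r)⁻¹ := by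
  classical
  let g₁ : Fin s × Fin n × Fin n → ℕ := fun z =>
    Classical.choose (exists_gvv_neg p κ ((twistedPow p κ σ b z.1) z.2.1 z.2.2))
  let g₂ : Fin s × Fin n × Fin n → ℕ := fun z =>
    Classical.choose (exists_gvv_neg p κ ((twistedPow p κ σ b z.1)⁻¹ z.2.1 z.2.2))
  refine ⟨(Finset.univ.sup g₁) ⊔ (Finset.univ.sup g₂), fun r hr => ⟨fun i j => ?_, fun i j => ?_⟩⟩
  · have h := Classical.choose_spec (exists_gvv_neg p κ ((twistedPow p κ σ b r) i j))
    refine gvv_mono p κ ?_ h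
    have h2 : g₁ (⟨r, hr⟩, i, j) ≤ Finset.univ.sup g₁ := Finset.le_sup (Finset.mem_univ _)
    have h3 : g₁ (⟨r, hr⟩, i, j) =
        Classical.choose (exists_gvv_neg p κ ((twistedPow p κ σ b r) i j)) := rfl
    rw [h3] at h2
    have h4 : Finset.univ.sup g₁ ≤ (Finset.univ.sup g₁) ⊔ (Finset.univ.sup g₂) := le_sup_left
    omega
  · have h := Classical.choose_spec (exists_gvv_neg p κ ((twistedPow p κ σ b r)⁻¹ i j))
    refine gvv_mono p κ ?_ h
    have h2 : g₂ (⟨r, hr⟩, i, j) ≤ Finset.univ.sup g₂ := Finset.le_sup (Finset.mem_univ _)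
    have h3 : g₂ (⟨r, hr⟩, i, j) =
        Classical.choose (exists_gvv_neg p κ ((twistedPow p κ σ b r)⁻¹ i j)) := rfl
    rw [h3] at h2
    have h4 : Finset.univ.sup g₂ ≤ (Finset.univ.sup g₁) ⊔ (Finset.univ.sup g₂) := le_sup_right
    omega

theorem statement_12 (n : ℕ) (σ : K ≃+* K)
    (hσ : ∀ x : 𝕎, σ (algebraMap 𝕎 K x) = algebraMap 𝕎 K (WittVector.frobenius x))
    (b₀ : Matrix (Fin n) (Fin n) K) (hb₀ : IsUnit b₀.det)
    (s : ℕ) (hs : 1 ≤ s) (a : Fin n → ℤ)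
    (hdec : twistedPow p κ σ b₀ s = Matrix.diagonal fun i => (p : K) ^ (a i)) :
    ∃ C₀ : ℚ, ∀ k : ℕ, 1 ≤ k →
      ∀ e : Equiv.Perm (Fin n), Antitone (fun i => ((k : ℚ) / (s : ℚ)) * (a (e i) : ℚ)) →
        ∀ μk : Fin n → ℤ, IsHodgePoint p κ (twistedPow p κ σ b₀ k) μk →
          tdist (fun i => ((k : ℚ) / (s : ℚ)) * (a (e i) : ℚ)) (fun i => (μk i : ℚ)) ≤ C₀ := by
  classical
  obtain ⟨c, hc⟩ := exists_c p κ σ b₀ s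
  set A : ℕ := ∑ i, (a i).natAbs with hA
  refine ⟨(n : ℚ) * (2 * ((n : ℚ) * A + (n : ℚ) * c)), ?_⟩
  intro k hk e he μk hμ
  obtain ⟨hanti, c₁, c₂, hc₁, hc₂, hBk⟩ := hμ
  set q : ℕ := k / s with hqdef
  set r : ℕ := k % s with hrdef
  have hks : s * q + r = k := Nat.div_add_mod k s
  have hrs : r < s := Nat.mod_lt _ (by omega)
  have hsplit : twistedPow p κ σ b₀ k =
      twistedPow p κ σ b₀ (s * q) * (twistedPow p κ σ b₀ r).map ⇑(σ ^ (s * q)) := by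
    conv_lhs => rw [← hks]
    exact tp_add p κ σ b₀ (s * q) r
  have hDq := tp_diag_pow p κ σ hσ b₀ s a hdec q
  set E := (twistedPow p κ σ b₀ r).map ⇑(σ ^ (s * q)) with hE
  have hEdet : IsUnit E.det := by
    rw [hE, det_map_equiv]
    exact (tp_det_isUnit p κ σ b₀ hb₀ r).map _
  have hEent : EntB p κ (-(c : ℤ)) E := by
    intro i j
    exact gvv_sigma_pow p κ σ hσ _ ((hc r hrs).1 i j)
  have hEinvEq : E⁻¹ = ((twistedPow p κ σ b₀ r)⁻¹).map ⇑(σ ^ (s * q)) := by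
    apply Matrix.inv_eq_right_inv
    rw [hE, ← map_mul_equiv, Matrix.mul_nonsing_inv _ (tp_det_isUnit p κ σ b₀ hb₀ r),
      Matrix.map_one _ (map_zero _) (_root_.map_one _)]
  have hEinv : EntB p κ (-(c : ℤ)) E⁻¹ := by
    rw [hEinvEq]
    intro i j
    exact gvv_sigma_pow p κ σ hσ _ ((hc r hrs).2 i j)
  set α : Fin n → ℤ := fun i => a (e i) with hαdef
  have hk0 : (0 : ℚ) < (k : ℚ) := by
    have : 0 < k := by omega
    exact_mod_cast this
  have hs0 : (0 : ℚ) < (s : ℚ) := by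
    have : 0 < s := by omega
    exact_mod_cast this
  have hα : Antitone α := by
    intro i j hij
    have h1 := he hij
    simp only [] at h1
    have h2 := le_of_mul_le_mul_left h1 (div_pos hk0 hs0)
    show a (e j) ≤ a (e i)
    exact_mod_cast h2
  set T : ℕ → ℤ := fun j => if h : j ≤ n then ∑ t : Fin j, α (lastT j h t) else 0 with hT
  set U : ℕ → ℤ := fun j => if h : j ≤ n then ∑ t : Fin j, μk (lastT j h t) else 0 with hU
  have hTeq : ∀ j (h : j ≤ n), T j = ∑ t : Fin j, α (lastT j h t) := fun j h => dif_pos h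
  have hUeq : ∀ j (h : j ≤ n), U j = ∑ t : Fin j, μk (lastT j h t) := fun j h => dif_pos h
  have keyA : ∀ j, j ≤ n → (q : ℤ) * T j - (j : ℤ) * c ≤ U j := by
    intro j hj
    have hDqMin : MinB p κ j ((q : ℤ) * T j)
        (Matrix.diagonal fun i => (p : K) ^ ((q : ℤ) * a i)) := by
      apply minB_diagonal
      intro R hRinj
      rw [← ppow_sum]
      refine gvv_mono p κ ?_ (gvv_ppow p κ _)
      have h1 : T j ≤ ∑ t, a (R t) := by
        have h2 : ∑ t, a (R t) = ∑ t, α (e.symm (R t)) := by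
          refine Finset.sum_congr rfl fun t _ => ?_
          show a (R t) = a (e (e.symm (R t)))
          rw [Equiv.apply_symm_apply]
        rw [h2, hTeq j hj]
        exact sum_lastT_le hj α hα _ (e.symm.injective.comp hRinj)
      calc (q : ℤ) * T j ≤ (q : ℤ) * ∑ t, a (R t) :=
            mul_le_mul_of_nonneg_left h1 (by positivity)
        _ = ∑ t, (q : ℤ) * a (R t) := Finset.mul_sum _ _ _
    have hBkMin : MinB p κ j ((q : ℤ) * T j + (j : ℤ) * (-(c : ℤ)))
        (twistedPow p κ σ b₀ k) := by
      rw [hsplit, hDq]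
      exact minB_mul_entB p κ hDqMin hEent
    have hDμ : Matrix.diagonal (fun i => (p : K) ^ (μk i)) =
        c₁⁻¹ * (twistedPow p κ σ b₀ k * c₂⁻¹) := by
      rw [hBk, Matrix.mul_assoc (c₁ * Matrix.diagonal fun i => (p : K) ^ (μk i)),
        Matrix.mul_nonsing_inv _ (IsIntegralUnit.det_isUnit p κ hc₂), Matrix.mul_one,
        ← Matrix.mul_assoc, Matrix.nonsing_inv_mul _ (IsIntegralUnit.det_isUnit p κ hc₁),
        Matrix.one_mul]
    have hDμMin : MinB p κ j ((q : ℤ) * T j - (j : ℤ) * c)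
        (Matrix.diagonal fun i => (p : K) ^ (μk i)) := by
      rw [hDμ]
      intro R C
      have h8 := entB_mul_minB p κ (IsIntegralUnit.entB_inv p κ hc₁)
        (minB_mul_entB p κ hBkMin (IsIntegralUnit.entB_inv p κ hc₂)) R C
      exact gvv_mono p κ (le_of_eq (by ring)) h8
    have h5 := hDμMin (lastT j hj) (lastT j hj)
    rw [det_diag_submatrix p κ _ _ (lastT_inj hj), ← ppow_sum] at h5
    have h6 := gvv_le p κ h5
    rw [hUeq j hj]
    exact h6
  have keyB : ∀ j, j ≤ n → U j - (j : ℤ) * c ≤ (q : ℤ) * T j := by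
    intro j hj
    have hDμMin : MinB p κ j (U j) (Matrix.diagonal fun i => (p : K) ^ (μk i)) := by
      apply minB_diagonal
      intro R hRinj
      rw [← ppow_sum]
      refine gvv_mono p κ ?_ (gvv_ppow p κ _)
      rw [hUeq j hj]
      exact sum_lastT_le hj μk hanti R hRinj
    have hBkMin : MinB p κ j (U j) (twistedPow p κ σ b₀ k) := by
      have h1 := minB_mul_entB p κ
        (entB_mul_minB p κ (IsIntegralUnit.entB p κ hc₁) hDμMin)
        (IsIntegralUnit.entB p κ hc₂)
      intro R C
      rw [hBk]
      have h8 := h1 R C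
      exact gvv_mono p κ (le_of_eq (by ring)) h8
    have hDqEq : Matrix.diagonal (fun i => (p : K) ^ ((q : ℤ) * a i)) =
        twistedPow p κ σ b₀ k * E⁻¹ := by
      rw [hsplit, hDq, Matrix.mul_assoc, Matrix.mul_nonsing_inv _ hEdet, Matrix.mul_one]
    have hDqMin : MinB p κ j (U j - (j : ℤ) * c)
        (Matrix.diagonal fun i => (p : K) ^ ((q : ℤ) * a i)) := by
      rw [hDqEq]
      intro R C
      have h8 := minB_mul_entB p κ hBkMin hEinv R C
      exact gvv_mono p κ (le_of_eq (by ring)) h8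
    have hinj : Function.Injective (fun t => e (lastT j hj t)) :=
      fun t t' hx => lastT_inj hj (e.injective hx)
    have h5 := hDqMin (fun t => e (lastT j hj t)) (fun t => e (lastT j hj t))
    rw [det_diag_submatrix p κ _ _ hinj, ← ppow_sum] at h5
    have h6 := gvv_le p κ h5
    have h7 : ∑ t : Fin j, (q : ℤ) * a (e (lastT j hj t)) =
        (q : ℤ) * ∑ t : Fin j, α (lastT j hj t) := by
      rw [Finset.mul_sum]
    rw [h7] at h6
    rw [hTeq j hj]
    exact h6
  have hUsucc : ∀ j (h : j + 1 ≤ n), U (j + 1) = μk ⟨n - (j + 1), by omega⟩ + U j := by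
    intro j h
    rw [hUeq (j + 1) h, hUeq j (by omega), Fin.sum_univ_succ]
    have hh0 : lastT (j + 1) h 0 = (⟨n - (j + 1), by omega⟩ : Fin n) := by
      apply Fin.ext
      simp [lastT]
    have hhs : ∀ t : Fin j, lastT (j + 1) h t.succ = lastT j (by omega : j ≤ n) t := by
      intro t
      apply Fin.ext
      show n - (j + 1) + (t.succ).1 = n - j + t.1
      have := t.2
      rw [Fin.val_succ]
      omega
    rw [hh0]
    congr 1
    exact Finset.sum_congr rfl fun t _ => by rw [hhs t]
  have hTsucc : ∀ j (h : j + 1 ≤ n), T (j + 1) = α ⟨n - (j + 1), by omega⟩ + T j := by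
    intro j h
    rw [hTeq (j + 1) h, hTeq j (by omega), Fin.sum_univ_succ]
    have hh0 : lastT (j + 1) h 0 = (⟨n - (j + 1), by omega⟩ : Fin n) := by
      apply Fin.ext
      simp [lastT]
    have hhs : ∀ t : Fin j, lastT (j + 1) h t.succ = lastT j (by omega : j ≤ n) t := by
      intro t
      apply Fin.ext
      show n - (j + 1) + (t.succ).1 = n - j + t.1
      have := t.2
      rw [Fin.val_succ]
      omega
    rw [hh0]
    congr 1
    exact Finset.sum_congr rfl fun t _ => by rw [hhs t]
  have habsT : ∀ j, j ≤ n → |T j| ≤ (n : ℤ) * A := by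
    intro j hj
    rw [hTeq j hj]
    refine le_trans (Finset.abs_sum_le_sum_abs _ _) ?_
    have h1 : ∀ t : Fin j, |α (lastT j hj t)| ≤ (A : ℤ) := by
      intro t
      have h2 := Finset.single_le_sum (f := fun i : Fin n => (a i).natAbs)
        (fun _ _ => Nat.zero_le _) (Finset.mem_univ (e (lastT j hj t)))
      show |a (e (lastT j hj t))| ≤ (A : ℤ)
      rw [Int.abs_eq_natAbs, hA]
      exact_mod_cast h2
    calc ∑ t : Fin j, |α (lastT j hj t)| ≤ ∑ _t : Fin j, (A : ℤ) :=
          Finset.sum_le_sum fun t _ => h1 t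
      _ = (j : ℤ) * A := by
          rw [Finset.sum_const, Finset.card_univ, Fintype.card_fin, nsmul_eq_mul]
      _ ≤ (n : ℤ) * A := by
          have hjn : (j : ℤ) ≤ n := by exact_mod_cast hj
          exact mul_le_mul_of_nonneg_right hjn (by positivity)
  have hksQ : (k : ℚ) / (s : ℚ) = (q : ℚ) + (r : ℚ) / (s : ℚ) := by
    have h1 : (k : ℚ) = (q : ℚ) * s + r := by
      rw [← hks]; push_cast; ring
    rw [h1, add_div, mul_div_cancel_right₀ _ (ne_of_gt hs0)]
  have hr01 : 0 ≤ (r : ℚ) / s ∧ (r : ℚ) / s ≤ 1 := by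
    constructor
    · positivity
    · rw [div_le_one hs0]
      exact_mod_cast hrs.le
  have est : ∀ j, j ≤ n →
      |((k : ℚ) / s) * (T j : ℚ) - (U j : ℚ)| ≤ (n : ℚ) * A + (n : ℚ) * c := by
    intro j hj
    have hjn : (j : ℤ) * c ≤ (n : ℤ) * c := by
      have hjn' : (j : ℤ) ≤ n := by exact_mod_cast hj
      exact mul_le_mul_of_nonneg_right hjn' (by positivity)
    have habsZ : |U j - (q : ℤ) * T j| ≤ (n : ℤ) * c := by
      have h1 := keyA j hj
      have h2 := keyB j hj
      rw [abs_le]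
      constructor <;> linarith
    have h1 : |(U j : ℚ) - (q : ℚ) * (T j : ℚ)| ≤ (n : ℚ) * c := by exact_mod_cast habsZ
    have h2 : |(T j : ℚ)| ≤ (n : ℚ) * A := by exact_mod_cast habsT j hj
    have h3 : ((k : ℚ) / s) * (T j : ℚ) - (U j : ℚ) =
        ((r : ℚ) / s) * (T j : ℚ) + ((q : ℚ) * (T j : ℚ) - (U j : ℚ)) := by
      rw [hksQ]; ring
    rw [h3]
    refine le_trans (abs_add_le _ _) ?_
    have h4 : |((r : ℚ) / s) * (T j : ℚ)| ≤ (n : ℚ) * A := by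
      rw [abs_mul, abs_of_nonneg hr01.1]
      calc ((r : ℚ) / s) * |(T j : ℚ)| ≤ 1 * |(T j : ℚ)| :=
            mul_le_mul_of_nonneg_right hr01.2 (abs_nonneg _)
        _ = |(T j : ℚ)| := one_mul _
        _ ≤ (n : ℚ) * A := h2
    rw [abs_sub_comm] at h1
    linarith
  have hper : ∀ i : Fin n,
      |((k : ℚ) / s) * (a (e i) : ℚ) - (μk i : ℚ)| ≤ 2 * ((n : ℚ) * A + (n : ℚ) * c) := by
    intro i
    have hi2 := i.2
    set j : ℕ := n - 1 - i.1 with hj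
    have hj1 : j + 1 ≤ n := by omega
    have hidx : (⟨n - (j + 1), by omega⟩ : Fin n) = i := by
      apply Fin.ext
      show n - (j + 1) = i.1
      omega
    have hU2 := hUsucc j hj1
    have hT2 := hTsucc j hj1
    rw [hidx] at hU2 hT2
    have e1 := est j (by omega)
    have e2 := est (j + 1) hj1
    have hμQ : (μk i : ℚ) = (U (j + 1) : ℚ) - (U j : ℚ) := by
      rw [hU2]; push_cast; ring
    have hαQ : (a (e i) : ℚ) = (T (j + 1) : ℚ) - (T j : ℚ) := by
      have hT3 : T (j + 1) = a (e i) + T j := hT2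
      rw [hT3]; push_cast; ring
    have h3 : ((k : ℚ) / s) * (a (e i) : ℚ) - (μk i : ℚ) =
        (((k : ℚ) / s) * (T (j + 1) : ℚ) - (U (j + 1) : ℚ)) -
          (((k : ℚ) / s) * (T j : ℚ) - (U j : ℚ)) := by
      rw [hμQ, hαQ]; ring
    rw [h3]
    refine le_trans (abs_sub _ _) ?_
    linarith
  have hfinal : tdist (fun i => ((k : ℚ) / s) * (a (e i) : ℚ)) (fun i => (μk i : ℚ)) ≤
      ∑ _i : Fin n, 2 * ((n : ℚ) * A + (n : ℚ) * c) := by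
    refine Finset.sum_le_sum fun i _ => ?_
    exact le_trans (max_le (le_abs_self _) (abs_nonneg _)) (hper i)
  refine le_trans hfinal ?_
  rw [Finset.sum_const, Finset.card_univ, Fintype.card_fin, nsmul_eq_mul]

end
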